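/- Let d ≥ 4 be even, let f be a monic cubic over ℚ, let t ∈ ℚ be nonzero, and suppose P(x) = t^2 x^d − f(x) is irreducible over ℚ. Then for any root α of P in an algebraic closure, the point (α, t·α^{d/2}) lies on the curve y^2 = f(x), and its coordinates generate the degree-d field ℚ(α). -/

import Mathlib

open Polynomial IntermediateField

/-- The discriminant of a polynomial over an algebraically closed field. -/
noncomputable def polyDisc {K : Type*} [Field K] (f : K[X]) : K :=
  (-1) ^ (f.natDegree * (f.natDegree - 1) / 2) * f.leadingCoeff ^ (f.natDegree - 2) *
    (f.roots.map fun r => (derivative f).eval r).prod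

/-- Let `d ≥ 4` be even, let `f` be a monic cubic over `ℚ` with nonzero discriminant,
let `t ∈ ℚ` be nonzero, and suppose `P(x) = t² x^d - f(x)` is irreducible over `ℚ`.
Then for any root `α` of `P` in an algebraic closure, the point `(α, t α^(d/2))` lies on
the curve `y² = f(x)`, and its coordinates generate the degree-`d` field `ℚ(α)`. -/
theorem point_on_curve_even_degree_twist (d : ℕ) (hd : 4 ≤ d) (heven : Even d)
    (f : ℚ[X]) (hmonic : f.Monic) (hdeg : f.natDegree = 3)
    (hdisc : polyDisc (f.map (algebraMap ℚ ℂ)) ≠ 0)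
    (t : ℚ) (ht : t ≠ 0) (hirr : Irreducible (C (t ^ 2) * X ^ d - f))
    (α : AlgebraicClosure ℚ) (hα : aeval α (C (t ^ 2) * X ^ d - f) = 0) :
    (algebraMap ℚ (AlgebraicClosure ℚ) t * α ^ (d / 2)) ^ 2 = aeval α f ∧
      Module.finrank ℚ (ℚ⟮α⟯ : IntermediateField ℚ (AlgebraicClosure ℚ)) = d := by

  have hα' : (algebraMap ℚ _ t) ^ 2 * α ^ d = aeval α f := by
    have := hα
    simp only [map_sub, map_mul, map_pow, aeval_C, aeval_X, sub_eq_zero] at this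
    simpa [map_pow] using this
  have hPdeg : (C (t ^ 2) * X ^ d - f).natDegree = d := by
    have h1 : (C (t ^ 2) * X ^ d).natDegree = d := by
      rw [natDegree_C_mul (by positivity), natDegree_X_pow]
    rw [natDegree_sub_eq_left_of_natDegree_lt]
    · exact h1
    · rw [h1, hdeg]; omega
  constructor
  · rw [mul_pow, ← pow_mul, Nat.div_mul_cancel heven.two_dvd]
    exact hα'
  · have hint : IsIntegral ℚ α := (show IsAlgebraic ℚ α from ⟨_, hirr.ne_zero, hα⟩).isIntegral
    rw [IntermediateField.adjoin.finrank hint]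
    have hm := minpoly.eq_of_irreducible hirr hα
    rw [← hm, natDegree_mul_C, hPdeg]
    intro h
    rw [inv_eq_zero, leadingCoeff_eq_zero] at h
    exact hirr.ne_zero h
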